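/- Let E be a real Hilbert space, f : E → ℝ convex and continuous, λ > 0, and x ∈ E. Then the function z ↦ λ f(z) + (1/2)‖z − x‖² has a unique minimizer over E (existence and uniqueness of the proximal point prox_{λf}(x)). -/

import Mathlib

private lemma fire_norm_mid_sq {E : Type*} [NormedAddCommGroup E] [InnerProductSpace ℝ E]
    (a b : E) :
    ‖(1/2 : ℝ) • a + (1/2 : ℝ) • b‖ ^ 2 = (‖a‖ ^ 2 + ‖b‖ ^ 2) / 2 - ‖a - b‖ ^ 2 / 4 := by
  have h1 := norm_add_sq_real a b
  have h2 := norm_sub_sq_real a b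
  have h3 : ‖(1/2 : ℝ) • a + (1/2 : ℝ) • b‖ ^ 2 = (1/4) * ‖a + b‖ ^ 2 := by
    rw [← smul_add, norm_smul, Real.norm_eq_abs]
    rw [mul_pow]
    norm_num
  linarith

/-- Existence and uniqueness of the proximal point: in a real Hilbert space `E`, for
`f : E → ℝ` convex and continuous and `λ > 0`, the function
`z ↦ λ f(z) + (1/2)‖z − x‖²` has a unique minimizer over `E`. -/
theorem fire_prox_exists_unique
    {E : Type*} [NormedAddCommGroup E] [InnerProductSpace ℝ E] [CompleteSpace E]
    (f : E → ℝ) (hf : ConvexOn ℝ Set.univ f) (hfc : Continuous f)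
    (lam : ℝ) (hlam : 0 < lam) (x : E) :
    ∃! z : E, ∀ w : E,
      lam * f z + (1 / 2 : ℝ) * ‖z - x‖ ^ 2 ≤ lam * f w + (1 / 2 : ℝ) * ‖w - x‖ ^ 2 := by
  set g : E → ℝ := fun z => lam * f z + (1 / 2 : ℝ) * ‖z - x‖ ^ 2 with hgdef
  -- midpoint (strong convexity) inequality
  have hmid : ∀ z w : E, g ((1/2 : ℝ) • z + (1/2 : ℝ) • w)
      ≤ (g z + g w) / 2 - ‖z - w‖ ^ 2 / 8 := by
    intro z w
    have hconv := hf.2 (Set.mem_univ z) (Set.mem_univ w)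
        (by norm_num : (0:ℝ) ≤ 1/2) (by norm_num : (0:ℝ) ≤ 1/2) (by norm_num)
    have hn : ‖((1/2 : ℝ) • z + (1/2 : ℝ) • w) - x‖ ^ 2
        = (‖z - x‖ ^ 2 + ‖w - x‖ ^ 2) / 2 - ‖z - w‖ ^ 2 / 4 := by
      have h := fire_norm_mid_sq (z - x) (w - x)
      have he : (1/2 : ℝ) • (z - x) + (1/2 : ℝ) • (w - x)
          = ((1/2 : ℝ) • z + (1/2 : ℝ) • w) - x := by
        rw [smul_sub, smul_sub]
        module
      have he2 : (z - x) - (w - x) = z - w := by abel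
      rw [he, he2] at h
      exact h
    simp only [smul_eq_mul] at hconv
    have hc2 := mul_le_mul_of_nonneg_left hconv hlam.le
    simp only [hgdef]
    rw [hn]
    linarith
  -- continuity of g
  have hgc : Continuous g := by
    rw [hgdef]
    exact (continuous_const.mul hfc).add
      (continuous_const.mul ((continuous_id.sub continuous_const).norm.pow 2))
  clear_value g
  -- local bounds from continuity at x
  obtain ⟨δ, hδ, hδf⟩ : ∃ δ > 0, ∀ y : E, dist y x < δ → dist (f y) (f x) < 1 :=
    Metric.continuous_iff.mp hfc x 1 one_pos
  have hub : ∀ y : E, ‖y - x‖ < δ → f y < f x + 1 := by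
    intro y hy
    have := hδf y (by rwa [dist_eq_norm])
    rw [Real.dist_eq] at this
    have := abs_lt.mp this
    linarith [this.2]
  have hlb : ∀ v : E, ‖v‖ < δ → f x - 1 < f (x + v) := by
    intro v hv
    have hconv := hf.2 (Set.mem_univ (x + v)) (Set.mem_univ (x - v))
        (by norm_num : (0:ℝ) ≤ 1/2) (by norm_num : (0:ℝ) ≤ 1/2) (by norm_num)
    have he : (1/2 : ℝ) • (x + v) + (1/2 : ℝ) • (x - v) = x := by module
    rw [he] at hconv
    simp only [smul_eq_mul] at hconv
    have h2 : f (x - v) < f x + 1 := by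
      apply hub
      simpa using hv
    linarith
  -- global linear lower bound for f : δ * f z ≥ δ * (f x - 1) - 2 * ‖z - x‖
  have key : ∀ z : E, δ * (f x - 1) - 2 * ‖z - x‖ ≤ δ * f z := by
    intro z
    by_cases hz : ‖z - x‖ ≤ δ / 2
    · have h1 : f x - 1 < f z := by
        have := hlb (z - x) (lt_of_le_of_lt hz (by linarith))
        rwa [add_sub_cancel] at this
      nlinarith [norm_nonneg (z - x), hδ]
    · push_neg at hz
      set s : ℝ := ‖z - x‖ with hs
      have hspos : 0 < s := lt_trans (by positivity) hz
      set θ : ℝ := δ / (2 * s) with hθdef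
      have hθpos : 0 < θ := by positivity
      have hθlt : θ < 1 := by
        rw [hθdef, div_lt_one (by positivity)]
        linarith
      have hconv := hf.2 (Set.mem_univ x) (Set.mem_univ z)
          (by linarith : (0:ℝ) ≤ 1 - θ) hθpos.le (by ring)
      have he : (1 - θ) • x + θ • z = x + θ • (z - x) := by
        rw [smul_sub]; module
      rw [he] at hconv
      have hnv : ‖θ • (z - x)‖ < δ := by
        rw [norm_smul, Real.norm_eq_abs, abs_of_pos hθpos, ← hs, hθdef]
        rw [div_mul_eq_mul_div, mul_comm]
        rw [div_lt_iff₀ (by positivity)]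
        nlinarith
      have h1 : f x - 1 < f (x + θ • (z - x)) := hlb _ hnv
      simp only [smul_eq_mul] at hconv
      -- combine : f x - 1 < (1-θ) f x + θ f z  so  θ*(f z - f x) > -1
      have h2 : θ * (f z - f x) > -1 := by nlinarith
      have h3 : θ * (2 * s) = δ := by
        rw [hθdef]; field_simp
      have h4 : (2 * s) * (-1) < (2 * s) * (θ * (f z - f x)) :=
        mul_lt_mul_of_pos_left h2 (by positivity)
      have h5 : (2 * s) * (θ * (f z - f x)) = δ * (f z - f x) := by
        rw [← h3]; ring
      rw [h5] at h4
      nlinarith [h4]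
  -- g is bounded below
  set b : ℝ := 2 * lam / δ with hbdef
  have hbδ : b * δ = 2 * lam := by rw [hbdef]; field_simp
  have hbnn : 0 ≤ b := by positivity
  obtain ⟨c, hc⟩ : ∃ c : ℝ, ∀ z : E, c ≤ g z := by
    refine ⟨lam * (f x - 1) - b ^ 2 / 2, fun z => ?_⟩
    have hk := key z
    have hflow : lam * (f x - 1) - b * ‖z - x‖ ≤ lam * f z := by
      rw [← mul_le_mul_iff_right₀ hδ]
      have h7 : lam * (δ * (f x - 1) - 2 * ‖z - x‖) ≤ lam * (δ * f z) :=
        mul_le_mul_of_nonneg_left hk hlam.le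
      have h6 : b * δ * ‖z - x‖ = 2 * lam * ‖z - x‖ := by rw [hbδ]
      nlinarith [h7, h6]
    have hsq : 0 ≤ (‖z - x‖ - b) ^ 2 := sq_nonneg _
    simp only [hgdef]
    nlinarith [hflow, hsq]
  -- infimum
  set S : Set ℝ := Set.range g with hSdef
  have hSne : S.Nonempty := ⟨g x, x, rfl⟩
  have hSbd : BddBelow S := ⟨c, by rintro a ⟨z, rfl⟩; exact hc z⟩
  set d : ℝ := sInf S with hddef
  have hd_le : ∀ w : E, d ≤ g w := fun w => csInf_le hSbd ⟨w, rfl⟩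
  -- minimizing sequence
  have hseq : ∀ n : ℕ, ∃ z : E, g z < d + 1 / (n + 1) := by
    intro n
    obtain ⟨a, ⟨z, rfl⟩, ha⟩ := Real.lt_sInf_add_pos hSne
      (by positivity : (0:ℝ) < 1 / (n + 1))
    exact ⟨z, ha⟩
  choose u hu using hseq
  clear_value d
  have hdist : ∀ z w : E, ‖z - w‖ ^ 2 ≤ 4 * ((g z - d) + (g w - d)) := by
    intro z w
    have h1 := hmid z w
    have h2 := hd_le ((1/2 : ℝ) • z + (1/2 : ℝ) • w)
    linarith
  have hcau : CauchySeq u := by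
    rw [Metric.cauchySeq_iff]
    intro ε hε
    obtain ⟨N, hN⟩ := exists_nat_gt (8 / ε ^ 2)
    refine ⟨N, fun m hm n hn => ?_⟩
    have h1 := hdist (u m) (u n)
    have h2 : g (u m) - d < 1 / (m + 1) := by linarith [hu m]
    have h3 : g (u n) - d < 1 / (n + 1) := by linarith [hu n]
    have h4 : (1:ℝ) / (m + 1) ≤ 1 / (N + 1) := by
      apply one_div_le_one_div_of_le (by positivity)
      exact_mod_cast Nat.succ_le_succ hm
    have h5 : (1:ℝ) / (n + 1) ≤ 1 / (N + 1) := by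
      apply one_div_le_one_div_of_le (by positivity)
      exact_mod_cast Nat.succ_le_succ hn
    have h6 : ‖u m - u n‖ ^ 2 < 8 / ((N:ℝ) + 1) := by
      have h8 : (8:ℝ) / ((N:ℝ)+1) = 8 * (1/((N:ℝ)+1)) := by ring
      rw [h8]
      linarith
    have h7 : 8 / ((N:ℝ) + 1) < ε ^ 2 := by
      rw [div_lt_iff₀ (by positivity)]
      rw [div_lt_iff₀ (by positivity)] at hN
      nlinarith [sq_nonneg ε]
    rw [dist_eq_norm]
    have : ‖u m - u n‖ ^ 2 < ε ^ 2 := lt_trans h6 h7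
    exact lt_of_pow_lt_pow_left₀ 2 hε.le this
  obtain ⟨z, hz⟩ := cauchySeq_tendsto_of_complete hcau
  have hgu : Filter.Tendsto (fun n => g (u n)) Filter.atTop (nhds d) := by
    have hupper : Filter.Tendsto (fun n : ℕ => d + 1 / ((n:ℝ) + 1)) Filter.atTop (nhds d) := by
      have h0 := tendsto_one_div_add_atTop_nhds_zero_nat (𝕜 := ℝ)
      simpa using tendsto_const_nhds.add h0
    exact tendsto_of_tendsto_of_tendsto_of_le_of_le tendsto_const_nhds hupper
      (fun n => hd_le (u n)) (fun n => (hu n).le)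
  have hgz : g z = d :=
    tendsto_nhds_unique ((hgc.tendsto z).comp hz) hgu
  refine ⟨z, fun w => ?_, ?_⟩
  · have : g z ≤ g w := by rw [hgz]; exact hd_le w
    simpa only [hgdef] using this
  · intro z' hz'
    have hz'' : ∀ w : E, g z' ≤ g w := by
      intro w
      have := hz' w
      simp only [hgdef]
      exact this
    have hzmin : ∀ w : E, g z ≤ g w := by
      intro w; rw [hgz]; exact hd_le w
    have h1 := hmid z' z
    have h2 : g z' ≤ g ((1/2 : ℝ) • z' + (1/2 : ℝ) • z) := hz'' _
    have h3 : g z' ≤ g z := hz'' z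
    have h4 : g z ≤ g z' := hzmin z'
    have h5 : ‖z' - z‖ = 0 := by nlinarith [norm_nonneg (z' - z)]
    exact sub_eq_zero.mp (norm_eq_zero.mp h5)
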